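/- Let K be a finitely generated group, let G₁ and G₂ be finite groups acting on finite sets X₁ and X₂ respectively, and let G₁×G₂ act on X₁×X₂ componentwise. Then χ_K(X₁×X₂; G₁×G₂) = χ_K(X₁; G₁) · χ_K(X₂; G₂). -/

import Mathlib

/-- The generalized orbifold Euler characteristic `χ_K(X;G)` associated to a group `K`:
`(1/|G|) Σ_{φ ∈ Hom(K×ℤ,G)} |X^{⟨φ⟩}|`. -/
noncomputable def chiGen (K : Type*) [Group K] (G : Type*) [Group G] (X : Type*)
    [MulAction G X] : ℚ :=
  (Nat.card G : ℚ)⁻¹ *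
    ∑ᶠ φ : (K × Multiplicative ℤ) →* G,
      (Nat.card {x : X // ∀ k, φ k • x = x} : ℚ)

/-- The componentwise action of `G₁ × G₂` on `X₁ × X₂`. -/
instance prodComponentwiseAction (G₁ G₂ X₁ X₂ : Type*) [Group G₁] [Group G₂]
    [MulAction G₁ X₁] [MulAction G₂ X₂] : MulAction (G₁ × G₂) (X₁ × X₂) where
  smul g x := (g.1 • x.1, g.2 • x.2)
  one_smul x := by
    show ((1 : G₁) • x.1, (1 : G₂) • x.2) = x
    simp
  mul_smul a b x := by
    show ((a.1 * b.1) • x.1, (a.2 * b.2) • x.2)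
        = ((a.1 • b.1 • x.1, a.2 • b.2 • x.2) : X₁ × X₂)
    simp [mul_smul]

instance : AddGroup.FG ℤ :=
  AddGroup.fg_iff.mpr ⟨({1} : Set ℤ), (by rw [← AddSubgroup.zmultiples_eq_closure]; exact Int.zmultiples_one), Set.finite_singleton 1⟩

/-- A product of finitely generated groups is finitely generated. -/
lemma groupFG_prod (A B : Type*) [Group A] [Group B] [Group.FG A] [Group.FG B] :
    Group.FG (A × B) := by
  obtain ⟨sA, hA, hAf⟩ := Group.fg_iff.mp ‹Group.FG A›
  obtain ⟨sB, hB, hBf⟩ := Group.fg_iff.mp ‹Group.FG B›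
  refine Group.fg_iff.mpr ⟨(insert 1 sA) ×ˢ (insert 1 sB), ?_, ?_⟩
  · rw [Subgroup.closure_prod (Set.mem_insert 1 sA) (Set.mem_insert 1 sB)]
    have h1 : Subgroup.closure (insert (1 : A) sA) = ⊤ := by
      rw [eq_top_iff, ← hA]; exact Subgroup.closure_mono (Set.subset_insert _ _)
    have h2 : Subgroup.closure (insert (1 : B) sB) = ⊤ := by
      rw [eq_top_iff, ← hB]; exact Subgroup.closure_mono (Set.subset_insert _ _)
    rw [h1, h2, Subgroup.top_prod_top]
  · exact (hAf.insert 1).prod (hBf.insert 1)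

/-- Homs from a finitely generated group to a finite group form a finite set. -/
lemma finite_monoidHom (H G : Type*) [Group H] [Group.FG H] [Group G] [Finite G] :
    Finite (H →* G) := by
  obtain ⟨s, hs, hsf⟩ := Group.fg_iff.mp ‹Group.FG H›
  have : Finite s := hsf
  have : Function.Injective (fun φ : H →* G => (fun x : s => φ x)) := by
    intro f g h
    refine MonoidHom.eq_of_eqOn_dense hs ?_
    intro x hx
    exact congrFun h ⟨x, hx⟩
  exact Finite.of_injective _ this

variable {H G₁ G₂ : Type*} [Group H] [Group G₁] [Group G₂]

/-- Homs to a product split. -/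
def homProdEquiv : ((H →* G₁) × (H →* G₂)) ≃ (H →* G₁ × G₂) where
  toFun p := p.1.prod p.2
  invFun φ := ((MonoidHom.fst G₁ G₂).comp φ, (MonoidHom.snd G₁ G₂).comp φ)
  left_inv p := by ext x <;> rfl
  right_inv φ := by ext x <;> rfl

set_option maxHeartbeats 1000000 in
theorem chiGen_prod (K : Type) [Group K] [Group.FG K]
    (G₁ G₂ X₁ X₂ : Type) [Group G₁] [Group G₂] [Finite G₁] [Finite G₂]
    [MulAction G₁ X₁] [MulAction G₂ X₂] [Finite X₁] [Finite X₂] :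
    chiGen K (G₁ × G₂) (X₁ × X₂) = chiGen K G₁ X₁ * chiGen K G₂ X₂ := by
  haveI hFG : Group.FG (K × Multiplicative ℤ) := groupFG_prod K (Multiplicative ℤ)
  set H := K × Multiplicative ℤ
  haveI h1 : Finite (H →* G₁) := finite_monoidHom H G₁
  haveI h2 : Finite (H →* G₂) := finite_monoidHom H G₂
  haveI h12 : Finite (H →* G₁ × G₂) := finite_monoidHom H (G₁ × G₂)
  cases nonempty_fintype (H →* G₁)
  cases nonempty_fintype (H →* G₂)
  cases nonempty_fintype (H →* G₁ × G₂)
  -- key pointwise identity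
  have key : ∀ (f : H →* G₁) (g : H →* G₂),
      (Nat.card {x : X₁ × X₂ // ∀ k, (f.prod g) k • x = x} : ℚ)
        = (Nat.card {x : X₁ // ∀ k, f k • x = x} : ℚ)
          * (Nat.card {x : X₂ // ∀ k, g k • x = x} : ℚ) := by
    intro f g
    have e : {x : X₁ × X₂ // ∀ k, (f.prod g) k • x = x}
        ≃ {x : X₁ // ∀ k, f k • x = x} × {x : X₂ // ∀ k, g k • x = x} := by
      refine (Equiv.subtypeEquivRight ?_).trans (Equiv.subtypeProdEquivProd
        (p := fun a : X₁ => ∀ k, f k • a = a) (q := fun b : X₂ => ∀ k, g k • b = b))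
      intro x
      constructor
      · intro h
        exact ⟨fun k => congrArg Prod.fst (h k), fun k => congrArg Prod.snd (h k)⟩
      · intro h k
        exact Prod.ext (h.1 k) (h.2 k)
    rw [Nat.card_congr e, Nat.card_prod]
    push_cast
    ring
  unfold chiGen
  rw [finsum_eq_sum_of_fintype, finsum_eq_sum_of_fintype, finsum_eq_sum_of_fintype]
  rw [← Equiv.sum_comp (homProdEquiv (H := H) (G₁ := G₁) (G₂ := G₂))
    (fun φ : H →* G₁ × G₂ => (Nat.card {x : X₁ × X₂ // ∀ k, φ k • x = x} : ℚ))]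
  rw [Fintype.sum_prod_type]
  simp only [homProdEquiv, Equiv.coe_fn_mk, key]
  rw [Nat.card_prod]
  rw [← Finset.sum_mul_sum]
  push_cast
  have hc1 : (Nat.card G₁ : ℚ) ≠ 0 := by
    simpa using Nat.card_pos (α := G₁) |>.ne'
  have hc2 : (Nat.card G₂ : ℚ) ≠ 0 := by
    simpa using Nat.card_pos (α := G₂) |>.ne'
  rw [mul_inv]
  ring
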